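/- Let Γ1 be the graph on {a,b,c,d,e} with edges {ad, ae, be, cd, de} and Γ2 the graph on {a1,a2,b,c,d,e} with edges {a1a2, a1c, a1d, a1e, a2b, a2d, a2e, be, cd, de}. The homomorphism φ : G(Γ1) → G(Γ2) determined by a ↦ a1·a2, b ↦ b, c ↦ c, d ↦ d, e ↦ e is injective. -/

import Mathlib

open scoped commutatorElement in
/-- The defining relators of the right-angled Artin group of a graph `G`:
commutators of pairs of adjacent vertices. -/
def raagRels {V : Type*} (G : SimpleGraph V) : Set (FreeGroup V) :=
  {r | ∃ x y : V, G.Adj x y ∧ r = ⁅FreeGroup.of x, FreeGroup.of y⁆}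

/-- The right-angled Artin group (partially commutative group) of a graph. -/
abbrev Raag {V : Type*} (G : SimpleGraph V) : Type _ := PresentedGroup (raagRels G)

/-- The canonical generator of a RAAG corresponding to a vertex. -/
def Raag.gen {V : Type*} (G : SimpleGraph V) (x : V) : Raag G := PresentedGroup.of x

/-- Vertices of Γ1. -/
inductive V1 | a | b | c | d | e
deriving DecidableEq

/-- Vertices of Γ2. -/
inductive V2 | a1 | a2 | b | c | d | e
deriving DecidableEq

open V1 in
/-- Γ1 : edges {ad, ae, be, cd, de}. -/
def Gamma1 : SimpleGraph V1 :=
  SimpleGraph.fromRel (fun x y => (x, y) ∈ [(a, d), (a, e), (b, e), (c, d), (d, e)])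

open V2 in
/-- Γ2 : edges {a1a2, a1c, a1d, a1e, a2b, a2d, a2e, be, cd, de}. -/
def Gamma2 : SimpleGraph V2 :=
  SimpleGraph.fromRel (fun x y => (x, y) ∈
    [(a1, a2), (a1, c), (a1, d), (a1, e), (a2, b), (a2, d), (a2, e), (b, e), (c, d), (d, e)])

/-! ### Auxiliary RAAG API -/

open scoped commutatorElement in
lemma Raag.commute_gen {V : Type*} {G : SimpleGraph V} {x y : V} (h : G.Adj x y) :
    Commute (Raag.gen G x) (Raag.gen G y) := by
  rw [← commutatorElement_eq_one_iff_commute]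
  have h2 : ⁅Raag.gen G x, Raag.gen G y⁆
      = PresentedGroup.mk (raagRels G) ⁅FreeGroup.of x, FreeGroup.of y⁆ :=
    (map_commutatorElement _ _ _).symm
  rw [h2]
  exact (QuotientGroup.eq_one_iff _).2 (Subgroup.subset_normalClosure ⟨x, y, h, rfl⟩)

/-- Universal property of a RAAG. -/
def Raag.lift {V : Type*} {G : SimpleGraph V} {H : Type*} [Group H] (f : V → H)
    (hf : ∀ x y, G.Adj x y → Commute (f x) (f y)) : Raag G →* H :=
  PresentedGroup.toGroup (f := f) (by
    rintro r ⟨x, y, hxy, rfl⟩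
    rw [map_commutatorElement, FreeGroup.lift_apply_of, FreeGroup.lift_apply_of]
    exact commutatorElement_eq_one_iff_commute.2 (hf x y hxy))

@[simp] lemma Raag.lift_gen {V : Type*} {G : SimpleGraph V} {H : Type*} [Group H] (f : V → H)
    (hf : ∀ x y, G.Adj x y → Commute (f x) (f y)) (x : V) :
    Raag.lift f hf (Raag.gen G x) = f x :=
  PresentedGroup.toGroup.of _

namespace RaagEmbed

instance : DecidableRel Gamma1.Adj := fun x y =>
  decidable_of_iff _ (SimpleGraph.fromRel_adj _ x y).symm

abbrev G1 := Raag Gamma1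

def A : G1 := Raag.gen Gamma1 V1.a
def B : G1 := Raag.gen Gamma1 V1.b
def C : G1 := Raag.gen Gamma1 V1.c
def D : G1 := Raag.gen Gamma1 V1.d
def E : G1 := Raag.gen Gamma1 V1.e

lemma hAD : Commute A D := Raag.commute_gen (by decide)
lemma hAE : Commute A E := Raag.commute_gen (by decide)
lemma hBE : Commute B E := Raag.commute_gen (by decide)
lemma hCD : Commute C D := Raag.commute_gen (by decide)
lemma hDE : Commute D E := Raag.commute_gen (by decide)

/-- partial conjugation σ : b ↦ a b a⁻¹, fixing a, c, d, e. -/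
def fσ : V1 → G1
  | .b => A * B * A⁻¹
  | x => Raag.gen Gamma1 x

/-- its inverse τ : b ↦ a⁻¹ b a. -/
def fτ : V1 → G1
  | .b => A⁻¹ * B * A
  | x => Raag.gen Gamma1 x

lemma hfσ : ∀ x y, Gamma1.Adj x y → Commute (fσ x) (fσ y) := by
  intro x y h
  have hbe : Commute (A * B * A⁻¹) E :=
    Commute.mul_left (hAE.mul_left hBE) hAE.inv_left
  cases x <;> cases y <;>
    first
      | exact absurd h (by decide)
      | exact hAD | exact hAD.symm | exact hAE | exact hAE.symm
      | exact hbe | exact hbe.symm | exact hCD | exact hCD.symm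
      | exact hDE | exact hDE.symm

lemma hfτ : ∀ x y, Gamma1.Adj x y → Commute (fτ x) (fτ y) := by
  intro x y h
  have hbe : Commute (A⁻¹ * B * A) E :=
    Commute.mul_left (hAE.inv_left.mul_left hBE) hAE
  cases x <;> cases y <;>
    first
      | exact absurd h (by decide)
      | exact hAD | exact hAD.symm | exact hAE | exact hAE.symm
      | exact hbe | exact hbe.symm | exact hCD | exact hCD.symm
      | exact hDE | exact hDE.symm

def σhom : G1 →* G1 := Raag.lift fσ hfσ
def τhom : G1 →* G1 := Raag.lift fτ hfτ

@[simp] lemma σ_A : σhom A = A := Raag.lift_gen _ _ _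
@[simp] lemma σ_B : σhom B = A * B * A⁻¹ := Raag.lift_gen _ _ _
@[simp] lemma σ_C : σhom C = C := Raag.lift_gen _ _ _
@[simp] lemma σ_D : σhom D = D := Raag.lift_gen _ _ _
@[simp] lemma σ_E : σhom E = E := Raag.lift_gen _ _ _
@[simp] lemma τ_A : τhom A = A := Raag.lift_gen _ _ _
@[simp] lemma τ_B : τhom B = A⁻¹ * B * A := Raag.lift_gen _ _ _
@[simp] lemma τ_C : τhom C = C := Raag.lift_gen _ _ _
@[simp] lemma τ_D : τhom D = D := Raag.lift_gen _ _ _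
@[simp] lemma τ_E : τhom E = E := Raag.lift_gen _ _ _

lemma τσ : τhom.comp σhom = MonoidHom.id G1 := by
  apply PresentedGroup.ext
  intro x
  show τhom (σhom (Raag.gen Gamma1 x)) = Raag.gen Gamma1 x
  cases x <;> simp [σhom, τhom, fσ, fτ, A, B] <;>
    · show τhom (A * B * A⁻¹) = B
      simp [map_mul, map_inv]
      group

lemma στ : σhom.comp τhom = MonoidHom.id G1 := by
  apply PresentedGroup.ext
  intro x
  show σhom (τhom (Raag.gen Gamma1 x)) = Raag.gen Gamma1 x
  cases x <;> simp [σhom, τhom, fσ, fτ, A, B] <;>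
    · show σhom (A⁻¹ * B * A) = B
      simp [map_mul, map_inv]
      group

/-- σ as an automorphism of `G1`. -/
def σA : MulAut G1 := MonoidHom.toMulEquiv σhom τhom τσ στ

def θ : Multiplicative ℤ →* MulAut G1 := zpowersHom _ σA

abbrev H := SemidirectProduct G1 (Multiplicative ℤ) θ

def t' : Multiplicative ℤ := Multiplicative.ofAdd 1

lemma θ_t (x : G1) : θ t' x = σhom x := by
  show (σA ^ ((Multiplicative.ofAdd (1 : ℤ)).toAdd)) x = σhom x
  simp only [toAdd_ofAdd, zpow_one]
  rfl

lemma θ_tinv (x : G1) : θ t'⁻¹ x = τhom x := by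
  rw [map_inv]
  show σA⁻¹ x = τhom x
  rfl

open SemidirectProduct

lemma inr_t_mul_inl (x : G1) :
    (inr t' : H) * inl x = inl (σhom x) * inr t' := by
  rw [← θ_t, inl_aut, mul_assoc, mul_assoc, ← map_mul, inv_mul_cancel, map_one, mul_one]

lemma inr_tinv_mul_inl (x : G1) :
    (inr t'⁻¹ : H) * inl x = inl (τhom x) * inr t'⁻¹ := by
  rw [← θ_tinv, show θ t'⁻¹ = (θ t')⁻¹ from map_inv θ t', inl_aut_inv, mul_assoc, mul_assoc, ← map_mul, mul_inv_cancel,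
    map_one, mul_one]

def f2 : V2 → H
  | .a1 => inr t'
  | .a2 => inl A * inr t'⁻¹
  | .b => inl B
  | .c => inl C
  | .d => inl D
  | .e => inl E

lemma k1 : Commute (inr t' : H) (inl A * inr t'⁻¹) := by
  show inr t' * (inl A * inr t'⁻¹) = inl A * inr t'⁻¹ * inr t'
  rw [← mul_assoc, inr_t_mul_inl, σ_A, mul_assoc, mul_assoc, ← map_mul, ← map_mul]
  simp

lemma k2 : Commute (inr t' : H) (inl C) := by
  show inr t' * inl C = inl C * inr t'
  rw [inr_t_mul_inl, σ_C]

lemma k3 : Commute (inr t' : H) (inl D) := by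
  show inr t' * inl D = inl D * inr t'
  rw [inr_t_mul_inl, σ_D]

lemma k4 : Commute (inr t' : H) (inl E) := by
  show inr t' * inl E = inl E * inr t'
  rw [inr_t_mul_inl, σ_E]

lemma k5 : Commute (inl A * inr t'⁻¹ : H) (inl B) := by
  show inl A * inr t'⁻¹ * inl B = inl B * (inl A * inr t'⁻¹)
  rw [mul_assoc, inr_tinv_mul_inl, τ_B]
  simp only [← mul_assoc, ← map_mul]
  congr 2
  group

lemma k6 : Commute (inl A * inr t'⁻¹ : H) (inl D) := by
  show inl A * inr t'⁻¹ * inl D = inl D * (inl A * inr t'⁻¹)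
  rw [mul_assoc, inr_tinv_mul_inl, τ_D]
  simp only [← mul_assoc, ← map_mul]
  congr 2
  exact hAD.eq

lemma k7 : Commute (inl A * inr t'⁻¹ : H) (inl E) := by
  show inl A * inr t'⁻¹ * inl E = inl E * (inl A * inr t'⁻¹)
  rw [mul_assoc, inr_tinv_mul_inl, τ_E]
  simp only [← mul_assoc, ← map_mul]
  congr 2
  exact hAE.eq

instance : DecidableRel Gamma2.Adj := fun x y =>
  decidable_of_iff _ (SimpleGraph.fromRel_adj _ x y).symm

lemma hf2 : ∀ x y, Gamma2.Adj x y → Commute (f2 x) (f2 y) := by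
  intro x y h
  cases x <;> cases y <;>
    first
      | exact absurd h (by decide)
      | exact k1 | exact k1.symm | exact k2 | exact k2.symm
      | exact k3 | exact k3.symm | exact k4 | exact k4.symm
      | exact k5 | exact k5.symm | exact k6 | exact k6.symm
      | exact k7 | exact k7.symm
      | exact hBE.map inl | exact (hBE.map inl).symm
      | exact hCD.map inl | exact (hCD.map inl).symm
      | exact hDE.map inl | exact (hDE.map inl).symm

def ψ : Raag Gamma2 →* H := Raag.lift f2 hf2

end RaagEmbed

open RaagEmbed SemidirectProduct in
/-- The homomorphism φ : G(Γ1) → G(Γ2) determined by a ↦ a1·a2 and fixing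
b, c, d, e is injective. -/
theorem hom_Gamma1_to_Gamma2_injective (φ : Raag Gamma1 →* Raag Gamma2)
    (ha : φ (Raag.gen Gamma1 V1.a) = Raag.gen Gamma2 V2.a1 * Raag.gen Gamma2 V2.a2)
    (hb : φ (Raag.gen Gamma1 V1.b) = Raag.gen Gamma2 V2.b)
    (hc : φ (Raag.gen Gamma1 V1.c) = Raag.gen Gamma2 V2.c)
    (hd : φ (Raag.gen Gamma1 V1.d) = Raag.gen Gamma2 V2.d)
    (he : φ (Raag.gen Gamma1 V1.e) = Raag.gen Gamma2 V2.e) :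
    Function.Injective φ := by
  have hcomp : ψ.comp φ = (inl : G1 →* H) := by
    apply PresentedGroup.ext
    intro x
    show ψ (φ (Raag.gen Gamma1 x)) = inl (Raag.gen Gamma1 x)
    cases x
    · rw [ha, map_mul]
      show ψ (Raag.gen Gamma2 V2.a1) * ψ (Raag.gen Gamma2 V2.a2) = inl A
      rw [ψ, Raag.lift_gen, Raag.lift_gen]
      show inr t' * (inl A * inr t'⁻¹) = inl A
      rw [← mul_assoc, inr_t_mul_inl, σ_A, mul_assoc, ← map_mul]
      simp
    · rw [hb]; exact Raag.lift_gen _ _ _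
    · rw [hc]; exact Raag.lift_gen _ _ _
    · rw [hd]; exact Raag.lift_gen _ _ _
    · rw [he]; exact Raag.lift_gen _ _ _
  have hinj : Function.Injective (ψ.comp φ) := by
    rw [hcomp]; exact inl_injective
  intro x y hxy
  exact hinj (by simp [MonoidHom.comp_apply, hxy])
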